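/- Let $f$ be convex and continuous, $X\subset\mathbb{R}^n$ compact, $\operatorname{conv}(X)$ its convex hull, $Z$ a linear subspace of $\mathbb{R}^q$, $Q\in\mathbb{R}^{q\times n}$, and $\rho>0$. For any $\bar\omega\in Z^\perp$, $\max_{\omega\in Z^\perp}\big[\phi^C(\omega)-\tfrac{1}{2\rho}\|\omega-\bar\omega\|_2^2\big] = \min_{x\in\operatorname{conv}(X),\,z\in Z} L_\rho(x,z,\bar\omega)$, where $\phi^C(\omega)=\min_{x\in\operatorname{conv}(X)} f(x)+\omega^\top Qx$ and $L_\rho(x,z,\omega)=f(x)+\omega^\top Qx+\tfrac{\rho}{2}\|Qx-z\|_2^2$. -/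

import Mathlib

open RealInnerProductSpace

set_option maxHeartbeats 1600000

/-- The convexified dual function `φ^C`. -/
noncomputable def phiC {n q : ℕ} (f : EuclideanSpace ℝ (Fin n) → ℝ)
    (Q : EuclideanSpace ℝ (Fin n) →ₗ[ℝ] EuclideanSpace ℝ (Fin q))
    (X : Set (EuclideanSpace ℝ (Fin n))) (ω : EuclideanSpace ℝ (Fin q)) : ℝ :=
  sInf {r : ℝ | ∃ x ∈ convexHull ℝ X, r = f x + ⟪ω, Q x⟫}

/-- The augmented Lagrangian `L_ρ`. -/
noncomputable def augL {n q : ℕ} (f : EuclideanSpace ℝ (Fin n) → ℝ)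
    (Q : EuclideanSpace ℝ (Fin n) →ₗ[ℝ] EuclideanSpace ℝ (Fin q)) (ρ : ℝ)
    (x : EuclideanSpace ℝ (Fin n)) (z ω : EuclideanSpace ℝ (Fin q)) : ℝ :=
  f x + ⟪ω, Q x⟫ + ρ / 2 * ‖Q x - z‖ ^ 2

/-- If `0 ≤ t*Δ + t^2*B` for all `t ∈ (0,1]`, with `B ≥ 0`, then `0 ≤ Δ`. -/
lemma aux_limit (d B : ℝ) (hB : 0 ≤ B)
    (h : ∀ t : ℝ, 0 < t → t ≤ 1 → 0 ≤ t * d + t ^ 2 * B) : 0 ≤ d := by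
  by_contra hd
  push_neg at hd
  rcases eq_or_lt_of_le hB with hB0 | hB0
  · have := h 1 one_pos le_rfl
    nlinarith
  · have ht : 0 < min 1 (-d / (2 * B)) :=
      lt_min one_pos (div_pos (by linarith) (by linarith))
    have h1 := h _ ht (min_le_left _ _)
    have h2 : min 1 (-d / (2 * B)) ≤ -d / (2 * B) := min_le_right _ _
    have h3 : min 1 (-d / (2 * B)) * (2 * B) ≤ -d := by
      rw [← le_div_iff₀ (by linarith)]; exact h2
    nlinarith [sq_nonneg (min 1 (-d / (2 * B)))]

/-- Infimum of a continuous function over the closure of a set equals the infimum over the set. -/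
lemma aux_sInf_closure {X : Type*} [TopologicalSpace X] {s : Set X} (hs : s.Nonempty)
    {h : X → ℝ} (hc : Continuous h) (hb : BddBelow (h '' closure s)) :
    sInf (h '' closure s) = sInf (h '' s) := by
  apply le_antisymm
  · exact csInf_le_csInf hb (hs.image h) (Set.image_mono subset_closure)
  · apply le_csInf ((hs.mono subset_closure).image h)
    rintro r ⟨x, hx, rfl⟩
    have hmem : h x ∈ closure (h '' s) :=
      (image_closure_subset_closure_image hc) (Set.mem_image_of_mem h hx)
    have hsub : h '' s ⊆ Set.Ici (sInf (h '' s)) := fun r' hr' =>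
      csInf_le (hb.mono (Set.image_mono subset_closure)) hr'
    exact isClosed_Ici.closure_subset_iff.mpr hsub hmem

theorem stmt1 (n q : ℕ) (f : EuclideanSpace ℝ (Fin n) → ℝ)
    (hf : ConvexOn ℝ Set.univ f) (hfc : Continuous f)
    (Q : EuclideanSpace ℝ (Fin n) →ₗ[ℝ] EuclideanSpace ℝ (Fin q))
    (X : Set (EuclideanSpace ℝ (Fin n))) (hX : IsCompact X) (hXne : X.Nonempty)
    (Z : Submodule ℝ (EuclideanSpace ℝ (Fin q)))
    (ρ : ℝ) (hρ : 0 < ρ) (ωbar : EuclideanSpace ℝ (Fin q)) (hωbar : ωbar ∈ Zᗮ) :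
    sSup {r : ℝ | ∃ ω ∈ Zᗮ, r = phiC f Q X ω - 1 / (2 * ρ) * ‖ω - ωbar‖ ^ 2} =
      sInf {r : ℝ | ∃ x ∈ convexHull ℝ X, ∃ z ∈ Z, r = augL f Q ρ x z ωbar} := by
  classical
  set hull : Set (EuclideanSpace ℝ (Fin n)) := convexHull ℝ X with hhull
  have hhne : hull.Nonempty := hXne.mono (subset_convexHull ℝ X)
  set K : Set (EuclideanSpace ℝ (Fin n)) := closure hull with hKdef
  have hKne : K.Nonempty := hhne.mono subset_closure
  have hKconv : Convex ℝ K := (convex_convexHull ℝ X).closure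
  have hKcomp : IsCompact K :=
    ((isBounded_convexHull (s := X)).mpr hX.isBounded).isCompact_closure
  have hQc : Continuous Q := Q.continuous_of_finiteDimensional
  -- projection onto Zᗮ
  set π : EuclideanSpace ℝ (Fin q) →L[ℝ] EuclideanSpace ℝ (Fin q) :=
    ContinuousLinearMap.id ℝ (EuclideanSpace ℝ (Fin q)) -
      Z.subtypeL.comp (Z.orthogonalProjectionOnto) with hπdef
  have hπapp : ∀ y, π y = y - (Z.orthogonalProjectionOnto y : EuclideanSpace ℝ (Fin q)) := by
    intro y; simp [hπdef]
  have hπmem : ∀ y, π y ∈ Zᗮ := by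
    intro y; rw [hπapp]; exact Submodule.sub_starProjection_mem_orthogonal (K := Z) y
  have hmemZ : ∀ y, y - π y ∈ Z := by
    intro y; rw [hπapp, sub_sub_cancel]; exact (Z.orthogonalProjectionOnto y).2
  have hinner0 : ∀ v ∈ Zᗮ, ∀ u ∈ Z, ⟪v, u⟫ = 0 := by
    intro v hv u hu
    exact (Submodule.mem_orthogonal' Z v).mp hv u hu
  have hinner : ∀ v ∈ Zᗮ, ∀ y, ⟪v, y⟫ = ⟪v, π y⟫ := by
    intro v hv y
    have h0 : ⟪v, y - π y⟫ = 0 := hinner0 v hv _ (hmemZ y)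
    rw [inner_sub_right] at h0
    linarith
  -- distance minimality of the projection
  have hdist : ∀ y, ∀ z ∈ Z, ‖π y‖ ^ 2 ≤ ‖y - z‖ ^ 2 := by
    intro y z hz
    have h1 : y - z = π y + (y - π y - z) := by abel
    have h2 : ⟪π y, y - π y - z⟫ = 0 :=
      hinner0 _ (hπmem y) _ (Z.sub_mem (hmemZ y) hz)
    rw [h1, norm_add_sq_real, h2]
    nlinarith [sq_nonneg ‖y - π y - z‖]
  -- the function D
  set D : EuclideanSpace ℝ (Fin n) → ℝ :=
    fun x => f x + ⟪ωbar, Q x⟫ + ρ / 2 * ‖π (Q x)‖ ^ 2 with hDdef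
  have hDc : Continuous D := by
    rw [hDdef]
    exact (hfc.add (continuous_const.inner hQc)).add
      (continuous_const.mul (((π.continuous.comp hQc).norm).pow 2))
  have hDeq : ∀ x, D x = augL f Q ρ x (Q x - π (Q x)) ωbar := by
    intro x; simp [augL, hDdef, sub_sub_cancel]
  have hDle : ∀ x z, z ∈ Z → D x ≤ augL f Q ρ x z ωbar := by
    intro x z hz
    have := hdist (Q x) z hz
    simp only [augL, hDdef]
    nlinarith
  -- minimizer of D over K
  obtain ⟨xs, hxsK, hxsmin'⟩ := hKcomp.exists_isMinOn hKne hDc.continuousOn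
  have hxsmin : ∀ x ∈ K, D xs ≤ D x := fun x hx => isMinOn_iff.mp hxsmin' x hx
  set w : EuclideanSpace ℝ (Fin q) := π (Q xs) with hw
  have hwmem : w ∈ Zᗮ := hπmem (Q xs)
  set ωs : EuclideanSpace ℝ (Fin q) := ωbar + ρ • w with hωs
  have hωsmem : ωs ∈ Zᗮ := Zᗮ.add_mem hωbar (Zᗮ.smul_mem ρ hwmem)
  have hDxs : D xs = f xs + ⟪ωbar, Q xs⟫ + ρ / 2 * ‖w‖ ^ 2 := by
    simp only [hDdef, ← hw]
  -- optimality: xs minimizes x ↦ f x + ⟪ωs, Q x⟫ over K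
  have hopt : ∀ x ∈ K, f xs + ⟪ωs, Q xs⟫ ≤ f x + ⟪ωs, Q x⟫ := by
    intro x hx
    have hB : (0:ℝ) ≤ ρ / 2 * ‖π (Q (x - xs))‖ ^ 2 := by positivity
    have hQsub : ⟪ωs, Q x⟫ - ⟪ωs, Q xs⟫ = ⟪ωs, Q (x - xs)⟫ := by
      rw [map_sub, inner_sub_right]
    have hωsQ : ⟪ωs, Q (x - xs)⟫ = ⟪ωbar, Q (x - xs)⟫ + ρ * ⟪w, Q (x - xs)⟫ := by
      rw [hωs, inner_add_left, real_inner_smul_left]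
    have hd : (f x + ⟪ωs, Q x⟫) - (f xs + ⟪ωs, Q xs⟫)
        = f x - f xs + ⟪ωbar, Q (x - xs)⟫ + ρ * ⟪w, Q (x - xs)⟫ := by
      linarith [hQsub, hωsQ]
    have key : ∀ t : ℝ, 0 < t → t ≤ 1 →
        0 ≤ t * ((f x + ⟪ωs, Q x⟫) - (f xs + ⟪ωs, Q xs⟫)) +
          t ^ 2 * (ρ / 2 * ‖π (Q (x - xs))‖ ^ 2) := by
      intro t ht0 ht1
      have hxtK : (1 - t) • xs + t • x ∈ K :=
        hKconv hxsK hx (by linarith) (le_of_lt ht0) (by ring)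
      set xt : EuclideanSpace ℝ (Fin n) := (1 - t) • xs + t • x with hxt'
      have hmin := hxsmin xt hxtK
      have hxteq : xt = xs + t • (x - xs) := by
        rw [hxt', smul_sub, sub_smul, one_smul]; abel
      have hfxt : f xt ≤ (1 - t) * f xs + t * f x :=
        hf.2 (Set.mem_univ xs) (Set.mem_univ x) (by linarith) (le_of_lt ht0) (by ring)
      have hQxt : Q xt = Q xs + t • Q (x - xs) := by
        rw [hxteq, map_add, map_smul]
      have hπxt : π (Q xt) = w + t • π (Q (x - xs)) := by
        rw [hQxt, map_add, map_smul, ← hw]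
      have hnorm : ‖π (Q xt)‖ ^ 2 =
          ‖w‖ ^ 2 + 2 * (t * ⟪w, Q (x - xs)⟫) + t ^ 2 * ‖π (Q (x - xs))‖ ^ 2 := by
        rw [hπxt, norm_add_sq_real, real_inner_smul_right, norm_smul,
          ← hinner w hwmem (Q (x - xs)), mul_pow, Real.norm_eq_abs, sq_abs]
      have hib : ⟪ωbar, Q xt⟫ = ⟪ωbar, Q xs⟫ + t * ⟪ωbar, Q (x - xs)⟫ := by
        rw [hQxt, inner_add_right, real_inner_smul_right]
      have hDxt : D xt ≤ (1 - t) * f xs + t * f x + ⟪ωbar, Q xs⟫ + t * ⟪ωbar, Q (x - xs)⟫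
          + ρ / 2 * ‖w‖ ^ 2 + ρ * (t * ⟪w, Q (x - xs)⟫)
          + t ^ 2 * (ρ / 2 * ‖π (Q (x - xs))‖ ^ 2) := by
        simp only [hDdef]
        rw [hnorm, hib]
        nlinarith [hfxt]
      rw [hd]
      rw [hDxs] at hmin
      linarith [hmin, hDxt]
    have h9 := aux_limit _ _ hB key
    linarith
  -- set-image identifications
  have himg : ∀ ω : EuclideanSpace ℝ (Fin q), {r : ℝ | ∃ x ∈ hull, r = f x + ⟪ω, Q x⟫}
      = (fun x : EuclideanSpace ℝ (Fin n) => f x + ⟪ω, Q x⟫) '' hull := by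
    intro ω; ext r
    simp only [Set.mem_setOf_eq, Set.mem_image]
    constructor
    · rintro ⟨x, hx, h⟩; exact ⟨x, hx, h.symm⟩
    · rintro ⟨x, hx, h⟩; exact ⟨x, hx, h.symm⟩
  have hgc : ∀ ω : EuclideanSpace ℝ (Fin q),
      Continuous (fun x : EuclideanSpace ℝ (Fin n) => f x + ⟪ω, Q x⟫) := fun ω =>
    hfc.add (continuous_const.inner hQc)
  -- phiC ωs = f xs + ⟪ωs, Q xs⟫
  have hphiCs : phiC f Q X ωs = f xs + ⟪ωs, Q xs⟫ := by
    have hb : BddBelow ((fun x : EuclideanSpace ℝ (Fin n) => f x + ⟪ωs, Q x⟫) '' K) := by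
      refine ⟨f xs + ⟪ωs, Q xs⟫, ?_⟩
      rintro r ⟨x, hx, rfl⟩
      exact hopt x hx
    rw [phiC, ← hhull, himg ωs, ← aux_sInf_closure hhne (hgc ωs) hb]
    apply le_antisymm
    · exact csInf_le hb ⟨xs, hxsK, rfl⟩
    · apply le_csInf (hKne.image _)
      rintro r ⟨x, hx, rfl⟩
      exact hopt x hx
  -- phiC ω ≤ f xs + ⟪ω, Q xs⟫ for any ω
  have hphiCle : ∀ ω : EuclideanSpace ℝ (Fin q), phiC f Q X ω ≤ f xs + ⟪ω, Q xs⟫ := by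
    intro ω
    obtain ⟨m, hmK, hmmin⟩ := hKcomp.exists_isMinOn hKne (hgc ω).continuousOn
    have hb : BddBelow ((fun x : EuclideanSpace ℝ (Fin n) => f x + ⟪ω, Q x⟫) '' K) := by
      refine ⟨f m + ⟪ω, Q m⟫, ?_⟩
      rintro r ⟨x, hx, rfl⟩
      exact isMinOn_iff.mp hmmin x hx
    rw [phiC, ← hhull, himg ω, ← aux_sInf_closure hhne (hgc ω) hb]
    exact csInf_le hb ⟨xs, hxsK, rfl⟩
  -- ⟪w, Q xs⟫ = ‖w‖^2
  have hwQ : ⟪w, Q xs⟫ = ‖w‖ ^ 2 := by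
    rw [hinner w hwmem (Q xs), ← hw, real_inner_self_eq_norm_sq]
  -- the dual objective value at ωs is D xs
  have hval : phiC f Q X ωs - 1 / (2 * ρ) * ‖ωs - ωbar‖ ^ 2 = D xs := by
    have h1 : ωs - ωbar = ρ • w := by rw [hωs]; abel
    have h2 : ‖ωs - ωbar‖ ^ 2 = ρ ^ 2 * ‖w‖ ^ 2 := by
      rw [h1, norm_smul, mul_pow, Real.norm_eq_abs, sq_abs]
    have h3 : ⟪ωs, Q xs⟫ = ⟪ωbar, Q xs⟫ + ρ * ‖w‖ ^ 2 := by
      rw [hωs, inner_add_left, real_inner_smul_left, hwQ]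
    rw [hphiCs, h3, h2, hDxs]
    field_simp
    ring
  -- weak duality: every dual value is at most D xs
  have hweak : ∀ ω ∈ Zᗮ, phiC f Q X ω - 1 / (2 * ρ) * ‖ω - ωbar‖ ^ 2 ≤ D xs := by
    intro ω hω
    have hv : ω - ωbar ∈ Zᗮ := Zᗮ.sub_mem hω hωbar
    have h1 : ⟪ω, Q xs⟫ = ⟪ωbar, Q xs⟫ + ⟪ω - ωbar, w⟫ := by
      have h0 := hinner _ hv (Q xs)
      rw [← hw] at h0
      rw [inner_sub_left] at h0
      linarith
    have h2 : (0:ℝ) ≤ ‖ρ • w - (ω - ωbar)‖ ^ 2 := sq_nonneg _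
    rw [norm_sub_sq_real, real_inner_smul_left, norm_smul, mul_pow, Real.norm_eq_abs,
      sq_abs] at h2
    have h3 := hphiCle ω
    rw [h1] at h3
    have h4 : ⟪ω - ωbar, w⟫ - 1 / (2 * ρ) * ‖ω - ωbar‖ ^ 2 ≤ ρ / 2 * ‖w‖ ^ 2 := by
      have e : ⟪ω - ωbar, w⟫ - 1 / (2 * ρ) * ‖ω - ωbar‖ ^ 2
          = (2 * ρ * ⟪w, ω - ωbar⟫ - ‖ω - ωbar‖ ^ 2) / (2 * ρ) := by
        rw [real_inner_comm]
        field_simp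
      rw [e, div_le_iff₀ (by linarith)]
      nlinarith [h2]
    rw [hDxs]
    linarith
  -- the right-hand side equals D xs
  have hrhs : sInf {r : ℝ | ∃ x ∈ hull, ∃ z ∈ Z, r = augL f Q ρ x z ωbar} = D xs := by
    set S : Set ℝ := {r : ℝ | ∃ x ∈ hull, ∃ z ∈ Z, r = augL f Q ρ x z ωbar} with hS
    have hlow : ∀ r ∈ S, D xs ≤ r := by
      rintro r ⟨x, hx, z, hz, rfl⟩
      exact le_trans (hxsmin x (subset_closure hx)) (hDle x z hz)
    have hbdd2 : BddBelow S := ⟨D xs, hlow⟩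
    apply le_antisymm
    · have hsub : D '' hull ⊆ S := by
        rintro r ⟨x, hx, rfl⟩
        exact ⟨x, hx, Q x - π (Q x), hmemZ (Q x), hDeq x⟩
      have h5 : sInf S ≤ sInf (D '' hull) := csInf_le_csInf hbdd2 (hhne.image D) hsub
      have hbddK : BddBelow (D '' K) := by
        refine ⟨D xs, ?_⟩
        rintro r ⟨x, hx, rfl⟩
        exact hxsmin x hx
      have h6 : sInf (D '' hull) = sInf (D '' K) := (aux_sInf_closure hhne hDc hbddK).symm
      have h7 : sInf (D '' K) ≤ D xs := csInf_le hbddK ⟨xs, hxsK, rfl⟩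
      linarith
    · obtain ⟨x0, hx0⟩ := hhne
      exact le_csInf ⟨_, ⟨x0, hx0, 0, Z.zero_mem, rfl⟩⟩ hlow
  -- the left-hand side equals D xs
  have hlhs : sSup {r : ℝ | ∃ ω ∈ Zᗮ, r = phiC f Q X ω - 1 / (2 * ρ) * ‖ω - ωbar‖ ^ 2}
      = D xs := by
    set S : Set ℝ := {r : ℝ | ∃ ω ∈ Zᗮ, r = phiC f Q X ω - 1 / (2 * ρ) * ‖ω - ωbar‖ ^ 2}
      with hS
    have hmem : D xs ∈ S := ⟨ωs, hωsmem, hval.symm⟩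
    have hub : ∀ r ∈ S, r ≤ D xs := by
      rintro r ⟨ω, hω, rfl⟩
      exact hweak ω hω
    exact le_antisymm (csSup_le ⟨D xs, hmem⟩ hub) (le_csSup ⟨D xs, hub⟩ hmem)
  rw [hlhs, hrhs]
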